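/- Let M be a Steiner quasigroup generated by a tuple ā with levels S₀ = {entries of ā}, S_{n+1} = {a·b : a,b ∈ Sₙ}. Then Sₙ = {t(ā) : t a reduced term with rk(t) ≤ n}: every element of Sₙ is the value of a reduced term of rank at most n, and every term of rank ≤ n evaluates into Sₙ. -/
import Mathlib


/-- A Steiner quasigroup: a commutative, idempotent binary structure
with `x * (x * y) = y`. -/
class Steiner (M : Type) extends Mul M where
  comm : ∀ x y : M, x * y = y * x
  idem : ∀ x : M, x * x = x
  lcancel : ∀ x y : M, x * (x * y) = y

namespace Steiner

variable {M : Type} [Steiner M]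

/-- Membership in the subquasigroup generated by `A`. -/
inductive mem_closure (A : Set M) : M → Prop
  | base {a : M} : a ∈ A → mem_closure A a
  | mul {a b : M} : mem_closure A a → mem_closure A b → mem_closure A (a * b)

/-- The subquasigroup generated by `A`. -/
def closure (A : Set M) : Set M := {x | mem_closure A x}

instance (A : Set M) : Steiner (closure A) where
  mul a b := ⟨a.1 * b.1, a.2.mul b.2⟩
  comm a b := Subtype.ext (Steiner.comm a.1 b.1)
  idem a := Subtype.ext (Steiner.idem a.1)
  lcancel a b := Subtype.ext (Steiner.lcancel a.1 b.1)

/-- `A` is independent: the generated subquasigroup has the universal mapping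
property over `A` with respect to the class of Steiner quasigroups. -/
def Independent (A : Set M) : Prop :=
  ∀ (N : Type) [Steiner N] (f : A → N),
    ∃ g : closure A →ₙ* N, ∀ a : A, g ⟨a.1, mem_closure.base a.2⟩ = f a

/-- A tuple is independent if its entries are pairwise distinct and its
range is an independent set. -/
def IndepTuple {ι : Type} (a : ι → M) : Prop :=
  Function.Injective a ∧ Independent (Set.range a)

/-- `A` is a free base of `M`: it generates `M` and `M` has the universal
mapping property over `A`. -/
def FreeBase (A : Set M) : Prop :=
  closure A = Set.univ ∧
  ∀ (N : Type) [Steiner N] (f : A → N),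
    ∃ g : M →ₙ* N, ∀ a : A, g a.1 = f a

/-- Terms in the language with one binary operation. -/
inductive Term (α : Type) where
  | var : α → Term α
  | mul : Term α → Term α → Term α

/-- Evaluation of a term at an assignment. -/
def Term.eval {α : Type} (e : α → M) : Term α → M
  | .var x => e x
  | .mul t s => t.eval e * s.eval e

/-- Equivalence of terms generated by applications of commutativity to subterms. -/
inductive TEquiv {α : Type} : Term α → Term α → Prop
  | refl (t : Term α) : TEquiv t t
  | symm {t s : Term α} : TEquiv t s → TEquiv s t
  | trans {t s u : Term α} : TEquiv t s → TEquiv s u → TEquiv t u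
  | comm (t s : Term α) : TEquiv (.mul t s) (.mul s t)
  | congr {t t' s s' : Term α} : TEquiv t t' → TEquiv s s' →
      TEquiv (.mul t s) (.mul t' s')

/-- The subterm relation. -/
inductive Subterm {α : Type} : Term α → Term α → Prop
  | refl (t : Term α) : Subterm t t
  | left {s t r : Term α} : Subterm s t → Subterm s (.mul t r)
  | right {s t r : Term α} : Subterm s t → Subterm s (.mul r t)

/-- A term is reduced if it contains no subterm of the forms `t₁·t₂` with
`t₁ ∼ t₂`, `t₁·(t₂·t₃)` with `t₁ ∼ t₂` or `t₁ ∼ t₃`, or `(t₁·t₂)·t₃` with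
`t₁ ∼ t₃` or `t₂ ∼ t₃`. -/
def Reduced {α : Type} (t : Term α) : Prop :=
  (∀ t1 t2 : Term α, Subterm (.mul t1 t2) t → ¬ TEquiv t1 t2) ∧
  (∀ t1 t2 t3 : Term α, Subterm (.mul t1 (.mul t2 t3)) t →
      ¬ TEquiv t1 t2 ∧ ¬ TEquiv t1 t3) ∧
  (∀ t1 t2 t3 : Term α, Subterm (.mul (.mul t1 t2) t3) t →
      ¬ TEquiv t1 t3 ∧ ¬ TEquiv t2 t3)

/-- The rank of a term. -/
def Term.rank {α : Type} : Term α → ℕ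
  | .var _ => 0
  | .mul t s => max t.rank s.rank + 1

/-- Number of occurrences of a variable in a term. -/
def Term.occ {α : Type} [DecidableEq α] (x : α) : Term α → ℕ
  | .var y => if y = x then 1 else 0
  | .mul t s => t.occ x + s.occ x

/-- The variable `x` occurs in the term. -/
inductive Occurs {α : Type} (x : α) : Term α → Prop
  | var : Occurs x (.var x)
  | left {t s : Term α} : Occurs x t → Occurs x (.mul t s)
  | right {t s : Term α} : Occurs x s → Occurs x (.mul t s)

/-- The levels of `M` over `A`. -/
def level (A : Set M) : ℕ → Set M
  | 0 => A
  | n + 1 => {z | ∃ a ∈ level A n, ∃ b ∈ level A n, z = a * b}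

/-- `S` is a standard free construction over `A`. -/
def StdFree (A : Set M) (S : ℕ → Set M) : Prop :=
  S 0 = A ∧
  (∀ n, S (n + 1) = {z | ∃ a ∈ S n, ∃ b ∈ S n, z = a * b}) ∧
  (∀ a ∈ S 0, ∀ b ∈ S 0, a ≠ b → a * b ∉ S 0) ∧
  (∀ n, ∀ a ∈ S (n + 1), a ∉ S n → ∀ b ∈ S (n + 1), b ∉ S n → a ≠ b →
    a * b ∉ S (n + 1)) ∧
  (∀ n, ∀ a ∈ S (n + 1), a ∉ S n → ∃ b ∈ S n, ∃ c ∈ S n, b ≠ c ∧ a = b * c ∧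
    ∀ b' ∈ S n, ∀ c' ∈ S n, b' ≠ c' → a = b' * c' → ({b', c'} : Set M) = {b, c})

theorem eval_mem_closure {α : Type} {A : Set M} (e : α → M) (h : ∀ x, e x ∈ A) :
    ∀ t : Term α, t.eval e ∈ closure A
  | .var x => mem_closure.base (h x)
  | .mul t s => mem_closure.mul (eval_mem_closure e h t) (eval_mem_closure e h s)

end Steiner

open Steiner

lemma teq_eval {M : Type} [Steiner M] {α : Type} (e : α → M) {t s : Term α}
    (h : TEquiv t s) : t.eval e = s.eval e := by
  induction h with
  | refl => rfl
  | symm _ ih => exact ih.symm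
  | trans _ _ ih1 ih2 => exact ih1.trans ih2
  | comm t s => exact Steiner.comm _ _
  | congr _ _ ih1 ih2 => simp [Term.eval, ih1, ih2]

lemma subterm_trans {α : Type} {r s t : Term α} (h1 : Subterm r s)
    (h2 : Subterm s t) : Subterm r t := by
  induction h2 with
  | refl => exact h1
  | left _ ih => exact .left ih
  | right _ ih => exact .right ih

lemma reduced_sub {α : Type} {s t : Term α} (h : Reduced t) (hs : Subterm s t) :
    Reduced s :=
  ⟨fun t1 t2 h2 => h.1 t1 t2 (subterm_trans h2 hs),
   fun t1 t2 t3 h2 => h.2.1 t1 t2 t3 (subterm_trans h2 hs),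
   fun t1 t2 t3 h2 => h.2.2 t1 t2 t3 (subterm_trans h2 hs)⟩

lemma reduced_var {α : Type} (x : α) : Reduced (Term.var x) := by
  refine ⟨fun t1 t2 h2 => ?_, fun t1 t2 t3 h2 => ?_, fun t1 t2 t3 h2 => ?_⟩ <;>
    cases h2

lemma exists_reduced {M : Type} [Steiner M] {α : Type} (e : α → M) :
    ∀ t : Term α, ∃ r : Term α, Reduced r ∧ r.rank ≤ t.rank ∧ r.eval e = t.eval e := by
  intro t
  induction t with
  | var x => exact ⟨.var x, reduced_var x, le_refl _, rfl⟩
  | mul t1 t2 ih1 ih2 =>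
    obtain ⟨r1, hr1, hrk1, he1⟩ := ih1
    obtain ⟨r2, hr2, hrk2, he2⟩ := ih2
    have hrk : max r1.rank r2.rank + 1 ≤ (Term.mul t1 t2).rank := by
      simp only [Term.rank]; omega
    have heval : (Term.mul r1 r2).eval e = (Term.mul t1 t2).eval e := by
      simp [Term.eval, he1, he2]
    by_cases h12 : TEquiv r1 r2
    · refine ⟨r1, hr1, ?_, ?_⟩
      · simp only [Term.rank]; omega
      · rw [← heval]
        simp only [Term.eval]
        rw [← teq_eval e h12, Steiner.idem]
    by_cases hR : ∃ u v, r2 = .mul u v ∧ (TEquiv r1 u ∨ TEquiv r1 v)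
    · obtain ⟨u, v, rfl, hc⟩ := hR
      have hurk : u.rank < max r1.rank (Term.mul u v).rank + 1 := by
        simp only [Term.rank]; omega
      have hvrk : v.rank < max r1.rank (Term.mul u v).rank + 1 := by
        simp only [Term.rank]; omega
      cases hc with
      | inl h =>
        refine ⟨v, reduced_sub hr2 (.right (.refl v)), by omega, ?_⟩
        rw [← heval]
        simp only [Term.eval]
        rw [teq_eval e h, Steiner.lcancel]
      | inr h =>
        refine ⟨u, reduced_sub hr2 (.left (.refl u)), by omega, ?_⟩
        rw [← heval]
        simp only [Term.eval]
        rw [teq_eval e h, Steiner.comm (u.eval e), Steiner.lcancel]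
    by_cases hL : ∃ u v, r1 = .mul u v ∧ (TEquiv u r2 ∨ TEquiv v r2)
    · obtain ⟨u, v, rfl, hc⟩ := hL
      have hurk : u.rank < max (Term.mul u v).rank r2.rank + 1 := by
        simp only [Term.rank]; omega
      have hvrk : v.rank < max (Term.mul u v).rank r2.rank + 1 := by
        simp only [Term.rank]; omega
      cases hc with
      | inl h =>
        refine ⟨v, reduced_sub hr1 (.right (.refl v)), by omega, ?_⟩
        rw [← heval]
        simp only [Term.eval]
        rw [← teq_eval e h, Steiner.comm _ (u.eval e), Steiner.lcancel]
      | inr h =>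
        refine ⟨u, reduced_sub hr1 (.left (.refl u)), by omega, ?_⟩
        rw [← heval]
        simp only [Term.eval]
        rw [← teq_eval e h, Steiner.comm _ (v.eval e),
          Steiner.comm (u.eval e), Steiner.lcancel]
    push_neg at hR hL
    refine ⟨.mul r1 r2, ⟨?_, ?_, ?_⟩, hrk, heval⟩
    · intro a b hs
      cases hs with
      | refl => exact h12
      | left h => exact hr1.1 a b h
      | right h => exact hr2.1 a b h
    · intro a b c hs
      cases hs with
      | refl => exact hR b c rfl
      | left h => exact hr1.2.1 a b c h
      | right h => exact hr2.2.1 a b c h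
    · intro a b c hs
      cases hs with
      | refl => exact hL a b rfl
      | left h => exact hr1.2.2 a b c h
      | right h => exact hr2.2.2 a b c h

/-- The levels over a generating tuple are exactly the values of (reduced)
terms of bounded rank. -/
theorem stmt13 {M : Type} [Steiner M] {ι : Type} (a : ι → M)
    (hgen : closure (Set.range a) = Set.univ) (n : ℕ) :
    level (Set.range a) n =
      {x : M | ∃ t : Term ι, Reduced t ∧ t.rank ≤ n ∧ t.eval a = x} ∧
    level (Set.range a) n =
      {x : M | ∃ t : Term ι, t.rank ≤ n ∧ t.eval a = x} := by
  have E2 : ∀ m : ℕ, level (Set.range a) m =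
      {x : M | ∃ t : Term ι, t.rank ≤ m ∧ t.eval a = x} := by
    intro m
    induction m with
    | zero =>
      ext x
      constructor
      · rintro ⟨i, rfl⟩
        exact ⟨.var i, le_refl _, rfl⟩
      · rintro ⟨t, ht, rfl⟩
        cases t with
        | var i => exact ⟨i, rfl⟩
        | mul t1 t2 => simp [Term.rank] at ht
    | succ m ih =>
      ext x
      constructor
      · rintro ⟨b, hb, c, hc, rfl⟩
        rw [ih] at hb hc
        obtain ⟨tb, htb, rfl⟩ := hb
        obtain ⟨tc, htc, rfl⟩ := hc
        refine ⟨.mul tb tc, ?_, rfl⟩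
        simp only [Term.rank]; omega
      · rintro ⟨t, ht, rfl⟩
        cases t with
        | var i =>
          have : (Term.var i).eval a ∈ level (Set.range a) m := by
            rw [ih]; exact ⟨.var i, Nat.zero_le _, rfl⟩
          exact ⟨_, this, _, this, (Steiner.idem _).symm⟩
        | mul t1 t2 =>
          simp only [Term.rank] at ht
          have h1 : t1.eval a ∈ level (Set.range a) m := by
            rw [ih]; exact ⟨t1, by omega, rfl⟩
          have h2 : t2.eval a ∈ level (Set.range a) m := by
            rw [ih]; exact ⟨t2, by omega, rfl⟩
          exact ⟨_, h1, _, h2, rfl⟩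
  refine ⟨?_, E2 n⟩
  ext x
  constructor
  · intro hx
    rw [E2 n] at hx
    obtain ⟨t, ht, rfl⟩ := hx
    obtain ⟨r, hr, hrk, he⟩ := exists_reduced a t
    exact ⟨r, hr, le_trans hrk ht, he⟩
  · rintro ⟨t, _, ht, rfl⟩
    rw [E2 n]
    exact ⟨t, ht, rfl⟩
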